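/- (Serret's theorem, used in Lemma 1.) Let α and β be irrational real numbers with regular continued fraction digits a_k(α) and a_k(β). Then the following are equivalent: (1) there exist integers a, b, c, d with ad − bc = ±1 and β = (aα + b)/(cα + d); (2) the continued fraction expansions of α and β have the same tail, i.e. there exist natural numbers k and m such that a_{k+i}(α) = a_{m+i}(β) for all i ≥ 0. -/

import Mathlib

/-- The iterates of the Gauss map starting from `x`. -/
noncomputable def gaussIter (x : ℝ) : ℕ → ℝ
  | 0 => x
  | k + 1 => 1 / (gaussIter x k - ⌊gaussIter x k⌋)

/-- The regular continued fraction digits of `x`. -/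
noncomputable def cfDigit (x : ℝ) (k : ℕ) : ℤ := ⌊gaussIter x k⌋


lemma gaussIter_zero (x : ℝ) : gaussIter x 0 = x := rfl

lemma gaussIter_succ (x : ℝ) (k : ℕ) :
    gaussIter x (k + 1) = 1 / (gaussIter x k - ⌊gaussIter x k⌋) := rfl

lemma gaussIter_add (x : ℝ) (k n : ℕ) :
    gaussIter x (k + n) = gaussIter (gaussIter x k) n := by
  induction n with
  | zero => rfl
  | succ n ih => rw [← Nat.add_assoc, gaussIter_succ, gaussIter_succ, ih]

lemma Irrational.gaussIterate {x : ℝ} (hx : Irrational x) (k : ℕ) :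
    Irrational (gaussIter x k) := by
  induction k with
  | zero => exact hx
  | succ k ih =>
      rw [gaussIter_succ, one_div]
      exact (ih.sub_intCast _).inv

lemma one_lt_gaussIter {x : ℝ} (hx : Irrational x) {k : ℕ} (hk : 1 ≤ k) :
    1 < gaussIter x k := by
  obtain ⟨j, rfl⟩ : ∃ j, k = j + 1 := ⟨k - 1, by omega⟩
  rw [gaussIter_succ]
  set z := gaussIter x j with hz
  have hzi : Irrational z := hx.gaussIterate j
  have h1 : (⌊z⌋ : ℝ) ≤ z := Int.floor_le z
  have h2 : z < ⌊z⌋ + 1 := Int.lt_floor_add_one z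
  have h0 : 0 < z - ⌊z⌋ := lt_of_le_of_ne (by linarith) (fun h => (hzi.ne_int ⌊z⌋) (by linarith))
  rw [lt_div_iff₀ h0]
  linarith

lemma gaussIter_identity (x : ℝ) (k : ℕ) :
    gaussIter x k = (⌊gaussIter x k⌋ : ℝ) + 1 / gaussIter x (k + 1) := by
  rw [gaussIter_succ, one_div_one_div]; ring

lemma cfDigit_shift (x : ℝ) (k i : ℕ) :
    cfDigit x (k + i) = cfDigit (gaussIter x k) i := by
  unfold cfDigit; rw [gaussIter_add]

lemma cfDigit_pos {x : ℝ} (hx : Irrational x) {k : ℕ} (hk : 1 ≤ k) :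
    1 ≤ cfDigit x k :=
  Int.le_floor.2 (by exact_mod_cast (one_lt_gaussIter hx hk).le)

lemma cf_dist : ∀ n : ℕ, ∀ x y : ℝ, Irrational x → Irrational y →
    (∀ i, cfDigit x i = cfDigit y i) → |x - y| ≤ (1/4 : ℝ) ^ n := by
  intro n
  induction n with
  | zero =>
    intro x y hx hy h
    have h0 : ⌊x⌋ = ⌊y⌋ := h 0
    have h0' : ((⌊x⌋ : ℤ) : ℝ) = ((⌊y⌋ : ℤ) : ℝ) := by exact_mod_cast h0
    have hx1 : (⌊x⌋ : ℝ) ≤ x := Int.floor_le x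
    have hx2 : x < ⌊x⌋ + 1 := Int.lt_floor_add_one x
    have hy1 : (⌊y⌋ : ℝ) ≤ y := Int.floor_le y
    have hy2 : y < ⌊y⌋ + 1 := Int.lt_floor_add_one y
    rw [pow_zero, abs_le]
    constructor <;> linarith
  | succ n ih =>
    intro x y hx hy h
    set x1 := gaussIter x 1 with hx1def
    set x2 := gaussIter x 2 with hx2def
    set y1 := gaussIter y 1 with hy1def
    set y2 := gaussIter y 2 with hy2def
    have hx2i : Irrational x2 := hx.gaussIterate 2
    have hy2i : Irrational y2 := hy.gaussIterate 2
    have hx1gt : 1 < x1 := one_lt_gaussIter hx le_rfl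
    have hx2gt : 1 < x2 := one_lt_gaussIter hx (by norm_num)
    have hy1gt : 1 < y1 := one_lt_gaussIter hy le_rfl
    have hy2gt : 1 < y2 := one_lt_gaussIter hy (by norm_num)
    have ex : x = (⌊x⌋ : ℝ) + 1 / x1 := gaussIter_identity x 0
    have ey : y = (⌊y⌋ : ℝ) + 1 / y1 := gaussIter_identity y 0
    have ex1 : x1 = (⌊x1⌋ : ℝ) + 1 / x2 := gaussIter_identity x 1
    have ey1 : y1 = (⌊y1⌋ : ℝ) + 1 / y2 := gaussIter_identity y 1
    have d0 : ((⌊x⌋ : ℤ) : ℝ) = ((⌊y⌋ : ℤ) : ℝ) := by exact_mod_cast (h 0)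
    have d1 : ((⌊x1⌋ : ℤ) : ℝ) = ((⌊y1⌋ : ℤ) : ℝ) := by exact_mod_cast (h 1)
    have ha1 : (1 : ℝ) ≤ (⌊x1⌋ : ℝ) := by exact_mod_cast cfDigit_pos hx (le_refl 1)
    have hb1 : (1 : ℝ) ≤ (⌊y1⌋ : ℝ) := by exact_mod_cast cfDigit_pos hy (le_refl 1)
    have htail : ∀ i, cfDigit x2 i = cfDigit y2 i := fun i => by
      rw [hx2def, hy2def, ← cfDigit_shift, ← cfDigit_shift]; exact h (2 + i)
    have ihd : |x2 - y2| ≤ (1/4 : ℝ) ^ n := ih x2 y2 hx2i hy2i htail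
    have hx1ne : x1 ≠ 0 := by linarith
    have hx2ne : x2 ≠ 0 := by linarith
    have hy1ne : y1 ≠ 0 := by linarith
    have hy2ne : y2 ≠ 0 := by linarith
    -- products
    have hxx : 2 < x1 * x2 := by
      have hinv : (1/x2) * x2 = 1 := one_div_mul_cancel hx2ne
      have : x1 * x2 = (⌊x1⌋ : ℝ) * x2 + 1 := by
        linear_combination x2 * ex1 + hinv
      nlinarith
    have hyy : 2 < y1 * y2 := by
      have hinv : (1/y2) * y2 = 1 := one_div_mul_cancel hy2ne
      have : y1 * y2 = (⌊y1⌋ : ℝ) * y2 + 1 := by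
        linear_combination y2 * ey1 + hinv
      nlinarith
    have s1 : x - y = (y1 - x1) / (x1 * y1) := by
      rw [ex, ey, d0]; field_simp; ring
    have s2 : y1 - x1 = (x2 - y2) / (x2 * y2) := by
      rw [ex1, ey1, d1]; field_simp; ring
    have s3 : x - y = (x2 - y2) / ((x1 * x2) * (y1 * y2)) := by
      rw [s1, s2, div_div]; ring_nf
    have hDpos : (0:ℝ) < (x1 * x2) * (y1 * y2) := by nlinarith
    have h4 : (4:ℝ) ≤ (x1 * x2) * (y1 * y2) := by nlinarith
    rw [s3, abs_div, abs_of_pos hDpos, pow_succ]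
    calc |x2 - y2| / ((x1 * x2) * (y1 * y2)) ≤ (1/4 : ℝ)^n / 4 := by
          apply div_le_div₀ (by positivity) ihd (by norm_num) h4
      _ = (1/4:ℝ)^n * (1/4) := by ring

lemma cf_eq_of_digits_eq {x y : ℝ} (hx : Irrational x) (hy : Irrational y)
    (h : ∀ i, cfDigit x i = cfDigit y i) : x = y := by
  by_contra hne
  have h0 : 0 < |x - y| := abs_pos.2 (sub_ne_zero.2 hne)
  obtain ⟨n, hn⟩ := exists_pow_lt_of_lt_one h0 (by norm_num : (1/4 : ℝ) < 1)
  linarith [cf_dist n x y hx hy h]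

def IsGL (x y : ℝ) : Prop :=
  ∃ a b c d : ℤ, (a * d - b * c = 1 ∨ a * d - b * c = -1) ∧
    y = (a * x + b) / (c * x + d)

lemma denom_ne_zero {α : ℝ} (hα : Irrational α) {c d : ℤ} (h : ¬(c = 0 ∧ d = 0)) :
    (c : ℝ) * α + d ≠ 0 := by
  rcases eq_or_ne c 0 with hc | hc
  · subst hc
    simp only [Int.cast_zero, zero_mul, zero_add]
    exact Int.cast_ne_zero.2 fun hd => h ⟨rfl, hd⟩
  · intro h0
    have hc' : (c : ℝ) ≠ 0 := Int.cast_ne_zero.2 hc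
    exact hα ⟨(-d / c : ℚ), by push_cast; rw [div_eq_iff hc']; linarith⟩

lemma det_ne_both_zero {a b c d : ℤ}
    (hdet : a * d - b * c = 1 ∨ a * d - b * c = -1) : ¬(c = 0 ∧ d = 0) := by
  rintro ⟨rfl, rfl⟩; simp at hdet

lemma moebius_irrational {α : ℝ} (hα : Irrational α) (a b c d : ℤ)
    (hdet : a * d - b * c = 1 ∨ a * d - b * c = -1) :
    Irrational ((a * α + b) / (c * α + d)) := by
  have hden : (c : ℝ) * α + d ≠ 0 := denom_ne_zero hα (det_ne_both_zero hdet)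
  rintro ⟨q, hq⟩
  have key : (q : ℝ) * ((c : ℝ) * α + d) = (a : ℝ) * α + b := by
    rw [hq, div_mul_cancel₀ _ hden]
  have key2 : α * ((q : ℝ) * c - a) = (b : ℝ) - q * d := by linear_combination key
  rcases eq_or_ne ((q : ℝ) * c - a) 0 with h1 | h1
  · have h2 : (b : ℝ) - q * d = 0 := by rw [← key2, h1, mul_zero]
    have h3 : ((a * d - b * c : ℤ) : ℝ) = 0 := by
      push_cast
      linear_combination (-(d : ℝ)) * h1 - (c : ℝ) * h2
    rcases hdet with h | h <;> rw [h] at h3 <;> norm_num at h3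
  · exact hα ⟨((b : ℚ) - q * d) / (q * c - a), by
      push_cast
      rw [div_eq_iff h1]
      linear_combination -key2⟩

lemma isGL_refl (x : ℝ) : IsGL x x :=
  ⟨1, 0, 0, 1, Or.inl (by norm_num), by norm_num⟩

lemma isGL_irrational {x y : ℝ} (hx : Irrational x) (h : IsGL x y) : Irrational y := by
  obtain ⟨a, b, c, d, hdet, heq⟩ := h
  rw [heq]; exact moebius_irrational hx a b c d hdet

lemma isGL_symm {x y : ℝ} (hx : Irrational x) (h : IsGL x y) : IsGL y x := by
  obtain ⟨a, b, c, d, hdet, heq⟩ := h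
  have hy : Irrational y := heq ▸ moebius_irrational hx a b c d hdet
  have hden1 : (c : ℝ) * x + d ≠ 0 := denom_ne_zero hx (det_ne_both_zero hdet)
  have hkey : y * ((c : ℝ) * x + d) = (a : ℝ) * x + b := by
    rw [heq, div_mul_cancel₀ _ hden1]
  refine ⟨d, -b, -c, a, ?_, ?_⟩
  · rcases hdet with h | h
    · left; linear_combination h
    · right; linear_combination h
  · have hcd2 : ¬((-c : ℤ) = 0 ∧ a = 0) := by
      rintro ⟨hc, ha⟩
      obtain rfl : c = 0 := by omega
      subst ha
      rcases hdet with h | h <;> simp at h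
    have hden2 : ((-c : ℤ) : ℝ) * y + a ≠ 0 := denom_ne_zero hy hcd2
    rw [eq_div_iff hden2]
    push_cast
    linear_combination -hkey

lemma isGL_trans {x y z : ℝ} (hx : Irrational x)
    (h1 : IsGL x y) (h2 : IsGL y z) : IsGL x z := by
  obtain ⟨a, b, c, d, hdet1, heq1⟩ := h1
  obtain ⟨e, f, g, h, hdet2, heq2⟩ := h2
  have hy : Irrational y := heq1 ▸ moebius_irrational hx a b c d hdet1
  have hden1 : (c : ℝ) * x + d ≠ 0 := denom_ne_zero hx (det_ne_both_zero hdet1)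
  have hden2 : (g : ℝ) * y + h ≠ 0 := denom_ne_zero hy (det_ne_both_zero hdet2)
  have hkey1 : y * ((c : ℝ) * x + d) = (a : ℝ) * x + b := by
    rw [heq1, div_mul_cancel₀ _ hden1]
  have hkey2 : z * ((g : ℝ) * y + h) = (e : ℝ) * y + f := by
    rw [heq2, div_mul_cancel₀ _ hden2]
  refine ⟨e * a + f * c, e * b + f * d, g * a + h * c, g * b + h * d, ?_, ?_⟩
  · rcases hdet1 with h1 | h1 <;> rcases hdet2 with h2 | h2
    · left; linear_combination (a * d - b * c) * h2 + h1
    · right; linear_combination (a * d - b * c) * h2 - h1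
    · right; linear_combination (a * d - b * c) * h2 + h1
    · left; linear_combination (a * d - b * c) * h2 - h1
  · have hprod : ((g : ℝ) * y + h) * ((c : ℝ) * x + d)
        = ((g * a + h * c : ℤ) : ℝ) * x + ((g * b + h * d : ℤ) : ℝ) := by
      push_cast
      linear_combination (g : ℝ) * hkey1
    have hdenN : ((g * a + h * c : ℤ) : ℝ) * x + ((g * b + h * d : ℤ) : ℝ) ≠ 0 := by
      rw [← hprod]; exact mul_ne_zero hden2 hden1
    rw [eq_div_iff hdenN]
    push_cast
    push_cast at hprod
    linear_combination (-z) * hprod + ((c : ℝ) * x + d) * hkey2 + (e : ℝ) * hkey1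

lemma isGL_gaussIter {α : ℝ} (hα : Irrational α) (k : ℕ) :
    IsGL (gaussIter α k) α := by
  induction k with
  | zero => exact isGL_refl α
  | succ k ih =>
    have hstep : IsGL (gaussIter α (k + 1)) (gaussIter α k) := by
      refine ⟨cfDigit α k, 1, 1, 0, Or.inr (by ring), ?_⟩
      have hx' : 1 < gaussIter α (k + 1) := one_lt_gaussIter hα (Nat.le_add_left 1 k)
      have hne : gaussIter α (k + 1) ≠ 0 := by linarith
      have hne' : (1 : ℝ) * gaussIter α (k + 1) + 0 ≠ 0 := by simpa using hne
      rw [gaussIter_identity α k]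
      push_cast
      rw [eq_div_iff hne']
      simp only [cfDigit]
      field_simp; ring
    exact isGL_trans (hα.gaussIterate (k + 1)) hstep ih

lemma floor_int_add_fract (B : ℤ) {t : ℝ} (h0 : 0 ≤ t) (h1 : t < 1) :
    ⌊(B : ℝ) + t⌋ = B := by
  rw [Int.floor_intCast_add, Int.floor_eq_zero_iff.2 ⟨h0, h1⟩, add_zero]

lemma gaussIter_one_eq {y t : ℝ} (a : ℤ) (hy : y = (a : ℝ) + t) (h0 : 0 ≤ t) (h1 : t < 1) :
    gaussIter y 1 = 1 / t := by
  rw [gaussIter_succ, gaussIter_zero, hy, floor_int_add_fract a h0 h1,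
    show (a : ℝ) + t - a = t by ring]

lemma descent : ∀ n : ℕ, ∀ A B C D : ℤ, C.toNat ≤ n → 1 ≤ C → 0 ≤ D → D ≤ C →
    (D = 0 → C = 1 ∧ B = 1) → (A * D - B * C = 1 ∨ A * D - B * C = -1) →
    ∀ x : ℝ, Irrational x → 1 < x →
    ∃ N M : ℕ, gaussIter (((A : ℝ) * x + B) / ((C : ℝ) * x + D)) N = gaussIter x M := by
  intro n
  induction n with
  | zero => intro A B C D hn hC _ _ _ _ _ _ _; omega
  | succ n ih =>
    intro A B C D hn hC hD0 hDC hterm hdet x hx hx1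
    have hxpos : (0:ℝ) < x := by linarith
    have hxne : x ≠ 0 := ne_of_gt hxpos
    rcases eq_or_lt_of_le hD0 with hD0' | hDpos
    · -- terminal case D = 0, C = 1, B = 1
      obtain ⟨hC1, hB1⟩ := hterm hD0'.symm
      subst hC1; subst hB1
      have hD' : D = 0 := hD0'.symm
      subst hD'
      have hyv : ((A : ℝ) * x + ((1:ℤ) : ℝ)) / (((1:ℤ) : ℝ) * x + ((0:ℤ) : ℝ))
          = (A : ℝ) + 1 / x := by
        push_cast; field_simp; ring
      refine ⟨1, 0, ?_⟩
      rw [hyv, gaussIter_one_eq A rfl (by positivity)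
        (by rw [div_lt_one hxpos]; linarith), one_div_one_div, gaussIter_zero]
    · rcases eq_or_lt_of_le hDC with hDC' | hDltC
      · -- case D = C : forces C = D = 1
        have h1 : C * (A - B) = 1 ∨ C * (A - B) = -1 := by
          rcases hdet with h | h
          · left; linear_combination h - A * hDC'
          · right; linear_combination h - A * hDC'
        have h2 : C = 1 ∧ (A - B = 1 ∨ A - B = -1) := by
          rcases h1 with h | h
          · rcases Int.mul_eq_one_iff_eq_one_or_neg_one.1 h with ⟨h3, h4⟩ | ⟨h3, h4⟩
            · exact ⟨h3, Or.inl h4⟩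
            · omega
          · have h' : C * (B - A) = 1 := by linear_combination -h
            rcases Int.mul_eq_one_iff_eq_one_or_neg_one.1 h' with ⟨h3, h4⟩ | ⟨h3, h4⟩
            · exact ⟨h3, Or.inr (by omega)⟩
            · omega
        obtain ⟨hC1, hAB⟩ := h2
        subst hC1
        have hD1 : D = 1 := hDC'
        subst hD1
        have hxp1 : (0:ℝ) < x + 1 := by linarith
        have hxp1' : x + 1 ≠ 0 := ne_of_gt hxp1
        rcases hAB with hAB | hAB
        · -- A = B + 1 : y = B + x/(x+1), tail reaches x after 2 steps
          obtain rfl : A = B + 1 := by omega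
          have hyv : (((B + 1 : ℤ) : ℝ) * x + (B : ℝ)) / (((1:ℤ) : ℝ) * x + ((1:ℤ) : ℝ))
              = (B : ℝ) + x / (x + 1) := by
            push_cast; field_simp; ring
          refine ⟨2, 0, ?_⟩
          rw [show (2:ℕ) = 1 + 1 from rfl, gaussIter_add, hyv]
          rw [gaussIter_one_eq B rfl (by positivity) (by rw [div_lt_one hxp1]; linarith),
            one_div_div]
          have hv2 : (x + 1) / x = ((1:ℤ) : ℝ) + 1 / x := by
            push_cast; field_simp
          rw [gaussIter_one_eq 1 hv2 (by positivity) (by rw [div_lt_one hxpos]; linarith),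
            one_div_one_div, gaussIter_zero]
        · -- A = B - 1 : y = (B-1) + 1/(x+1), tail reaches gauss x after 2 steps
          obtain rfl : A = B - 1 := by omega
          have hyv : (((B - 1 : ℤ) : ℝ) * x + (B : ℝ)) / (((1:ℤ) : ℝ) * x + ((1:ℤ) : ℝ))
              = ((B - 1 : ℤ) : ℝ) + 1 / (x + 1) := by
            push_cast; field_simp; ring
          refine ⟨2, 1, ?_⟩
          rw [show (2:ℕ) = 1 + 1 from rfl, gaussIter_add, hyv]
          rw [gaussIter_one_eq (B - 1) rfl (by positivity)
            (by rw [div_lt_one hxp1]; linarith), one_div_one_div]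
          rw [gaussIter_succ, gaussIter_zero, gaussIter_succ, gaussIter_zero]
          have hfx : ⌊x + 1⌋ = ⌊x⌋ + 1 := Int.floor_add_one x
          rw [hfx]
          push_cast
          ring_nf
      · -- main case 1 ≤ D < C
        set y : ℝ := ((A : ℝ) * x + B) / ((C : ℝ) * x + D) with hydef
        have hCr : (1:ℝ) ≤ (C : ℝ) := by exact_mod_cast hC
        have hDr : (1:ℝ) ≤ (D : ℝ) := by exact_mod_cast hDpos
        have hden : (0:ℝ) < (C : ℝ) * x + D := by nlinarith
        have hyirr : Irrational y := moebius_irrational hx A B C D hdet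
        set a : ℤ := ⌊y⌋ with hadef
        have ha1 : (a : ℝ) ≤ y := Int.floor_le y
        have ha2 : y < a + 1 := Int.lt_floor_add_one y
        have hane : y ≠ (a : ℝ) := hyirr.ne_int a
        have hfr0 : 0 < y - a := lt_of_le_of_ne (by linarith) (fun h => hane (by linarith))
        have hfr1 : y - a < 1 := by linarith
        have hkey : y * ((C : ℝ) * x + D) = (A : ℝ) * x + B := by
          rw [hydef, div_mul_cancel₀ _ (ne_of_gt hden)]
        have hnum : (y - a) * ((C : ℝ) * x + D)
            = ((A - a * C : ℤ) : ℝ) * x + ((B - a * D : ℤ) : ℝ) := by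
          push_cast
          linear_combination hkey
        set C' : ℤ := A - a * C with hC'def
        set D' : ℤ := B - a * D with hD'def
        clear_value C' D'
        clear_value a
        clear_value y
        have hp1 : (0:ℝ) < (C' : ℝ) * x + D' := by
          rw [← hnum]; exact mul_pos hfr0 hden
        have hp2 : (C' : ℝ) * x + (D' : ℝ) < (C : ℝ) * x + D := by
          rw [← hnum]; nlinarith
        have hdet' : C * D' - D * C' = 1 ∨ C * D' - D * C' = -1 := by
          rcases hdet with h | h
          · right; linear_combination -h + C * hD'def - D * hC'def
          · left; linear_combination -h + C * hD'def - D * hC'def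
        -- integer facts
        have hC2 : 2 ≤ C := by omega
        have hC'pos : 1 ≤ C' := by
          by_contra hcon
          push_neg at hcon
          have hcon' : C' ≤ 0 := by omega
          rcases eq_or_lt_of_le hcon' with hz | hneg
          · -- C' = 0
            have hz' : C' = 0 := hz
            have hD'1 : 1 ≤ D' := by
              have : (0:ℝ) < (D' : ℝ) := by
                have := hp1; rw [hz'] at this; push_cast at this; linarith
              exact_mod_cast (by exact_mod_cast this : (0:ℤ) < D')
            have e1 : C * 1 ≤ C * D' := mul_le_mul_of_nonneg_left hD'1 (by omega)
            rcases hdet' with h | h <;> rw [hz'] at h <;> linarith [e1]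
          · -- C' < 0
            have hC'le : C' ≤ -1 := by omega
            have hD'2 : 2 ≤ D' := by
              have hr : (1:ℝ) < (D' : ℝ) := by
                have hCr' : (C' : ℝ) ≤ -1 := by exact_mod_cast hC'le
                nlinarith [mul_nonneg (by linarith : (0:ℝ) ≤ -(C':ℝ) - 1) (le_of_lt hxpos)]
              have : (1:ℤ) < D' := by exact_mod_cast hr
              omega
            have e1 : 0 ≤ (C - 2) * (D' - 2) := mul_nonneg (by omega) (by omega)
            have e2 : 0 ≤ (D - 1) * (-C' - 1) := mul_nonneg (by omega) (by omega)
            rcases hdet' with h | h <;> linarith [e1, e2]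
        have hC'lt : C' ≤ C - 1 := by
          by_contra hcon
          push_neg at hcon
          have hCC' : C ≤ C' := by omega
          have hD'ltD : D' ≤ D - 1 := by
            have hr : (D' : ℝ) < (D : ℝ) := by
              have : ((C' : ℝ) - C) * x ≥ 0 := by
                apply mul_nonneg _ (le_of_lt hxpos)
                have : (C : ℝ) ≤ (C' : ℝ) := by exact_mod_cast hCC'
                linarith
              nlinarith
            have : D' < D := by exact_mod_cast hr
            omega
          have e1 : 0 ≤ D * (C' - C) := mul_nonneg (by omega) (by omega)
          have e2 : 0 ≤ C * (D - 1 - D') := mul_nonneg (by omega) (by omega)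
          rcases hdet' with h | h <;> linarith [e1, e2]
        have hD'0 : 0 ≤ D' := by
          by_contra hcon
          push_neg at hcon
          have : D' ≤ -1 := by omega
          have e1 : 0 ≤ C * (-D' - 1) := mul_nonneg (by omega) (by omega)
          have e2 : 0 ≤ (D - 1) * (C' - 1) := mul_nonneg (by omega) (by omega)
          rcases hdet' with h | h <;> linarith [e1, e2]
        have hD'le : D' ≤ C' := by
          by_contra hcon
          push_neg at hcon
          have : C' + 1 ≤ D' := by omega
          have e1 : 0 ≤ C * (D' - C' - 1) := mul_nonneg (by omega) (by omega)
          have e2 : 0 ≤ (C - 1 - D) * C' := mul_nonneg (by omega) (by omega)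
          rcases hdet' with h | h <;> linarith [e1, e2]
        have hterm' : D' = 0 → C' = 1 ∧ D = 1 := by
          intro hz
          have h' : D * C' = 1 ∨ D * C' = -1 := by
            rcases hdet' with h | h
            · right; linear_combination -h + C * hz
            · left; linear_combination -h + C * hz
          rcases h' with h | h
          · rcases Int.mul_eq_one_iff_eq_one_or_neg_one.1 h with ⟨h3, h4⟩ | ⟨h3, h4⟩
            · exact ⟨h4, h3⟩
            · omega
          · have e1 : 0 < D * C' := mul_pos (by omega) (by omega)
            linarith [e1]
        have hmeas : C'.toNat ≤ n := by omega
        obtain ⟨N, M, hNM⟩ := ih C D C' D' hmeas hC'pos hD'0 hD'le hterm' hdet' x hx hx1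
        refine ⟨N + 1, M, ?_⟩
        have hg1 : gaussIter y 1 = ((C : ℝ) * x + D) / ((C' : ℝ) * x + D') := by
          rw [gaussIter_succ, gaussIter_zero, ← hadef]
          have : y - (a : ℝ) = (((C' : ℝ) * x + D')) / ((C : ℝ) * x + D) := by
            rw [eq_div_iff (ne_of_gt hden)]; exact hnum
          rw [this, one_div_div]
        rw [show N + 1 = 1 + N from by omega, gaussIter_add, hg1, hNM]

noncomputable def cfP (α : ℝ) : ℕ → ℤ × ℤ
  | 0 => (1, 0)
  | k + 1 => ((cfP α k).1 * cfDigit α k + (cfP α k).2, (cfP α k).1)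

noncomputable def cfR (α : ℝ) : ℕ → ℤ × ℤ
  | 0 => (0, 1)
  | k + 1 => ((cfR α k).1 * cfDigit α k + (cfR α k).2, (cfR α k).1)

lemma cfP_succ (α : ℝ) (k : ℕ) :
    cfP α (k + 1) = ((cfP α k).1 * cfDigit α k + (cfP α k).2, (cfP α k).1) := rfl

lemma cfR_succ (α : ℝ) (k : ℕ) :
    cfR α (k + 1) = ((cfR α k).1 * cfDigit α k + (cfR α k).2, (cfR α k).1) := rfl

lemma cf_det (α : ℝ) : ∀ k : ℕ,
    (cfP α k).1 * (cfR α k).2 - (cfP α k).2 * (cfR α k).1 = 1 ∨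
    (cfP α k).1 * (cfR α k).2 - (cfP α k).2 * (cfR α k).1 = -1 := by
  intro k
  induction k with
  | zero => left; simp [cfP, cfR]
  | succ k ih =>
    rw [cfP_succ, cfR_succ]
    rcases ih with h | h
    · right; simp only; linear_combination -h
    · left; simp only; linear_combination -h

lemma cf_alpha {α : ℝ} (hα : Irrational α) : ∀ k : ℕ,
    0 < ((cfR α k).1 : ℝ) * gaussIter α k + ((cfR α k).2 : ℝ) ∧
    α * (((cfR α k).1 : ℝ) * gaussIter α k + ((cfR α k).2 : ℝ))
      = ((cfP α k).1 : ℝ) * gaussIter α k + ((cfP α k).2 : ℝ) := by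
  intro k
  induction k with
  | zero =>
    constructor
    · simp [cfR]
    · simp [cfP, cfR, gaussIter_zero]
  | succ k ih =>
    obtain ⟨ihpos, iheq⟩ := ih
    set x : ℝ := gaussIter α k with hxdef
    set x' : ℝ := gaussIter α (k + 1) with hx'def
    have hx'gt : 1 < x' := one_lt_gaussIter hα (Nat.le_add_left 1 k)
    have hx'pos : (0:ℝ) < x' := by linarith
    have hxa : x - (⌊x⌋ : ℝ) ≠ 0 := by
      have := (hα.gaussIterate k).ne_int ⌊x⌋
      intro h; exact this (by linarith [sub_eq_zero.1 h])
    have hrel : x * x' = (cfDigit α k : ℝ) * x' + 1 := by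
      have hx'eq : x' = 1 / (x - ⌊x⌋) := gaussIter_succ α k
      have : x' * (x - ⌊x⌋) = 1 := by
        rw [hx'eq, div_mul_cancel₀ _ hxa]
      unfold cfDigit
      rw [← hxdef]
      linear_combination this
    rw [cfP_succ, cfR_succ]
    simp only
    push_cast
    set p : ℝ := ((cfP α k).1 : ℝ)
    set q : ℝ := ((cfP α k).2 : ℝ)
    set r : ℝ := ((cfR α k).1 : ℝ)
    set s : ℝ := ((cfR α k).2 : ℝ)
    set A : ℝ := (cfDigit α k : ℝ)
    have e1 : (r * A + s) * x' + r = x' * (r * x + s) := by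
      linear_combination (-r) * hrel
    constructor
    · rw [e1]; exact mul_pos hx'pos ihpos
    · linear_combination α * e1 + x' * iheq + p * hrel

lemma cf_r_base (α : ℝ) : cfR α 1 = (1, 0) := by
  rw [cfR_succ]; simp [cfR]

lemma cf_r_pos {α : ℝ} (hα : Irrational α) : ∀ k : ℕ, 1 ≤ k →
    1 ≤ (cfR α k).1 ∧ 0 ≤ (cfR α k).2 := by
  intro k hk
  induction k, hk using Nat.le_induction with
  | base => rw [cf_r_base]; simp
  | succ k hk ih =>
    obtain ⟨h1, h2⟩ := ih
    have ha : 1 ≤ cfDigit α k := cfDigit_pos hα hk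
    rw [cfR_succ]
    constructor
    · simp only
      nlinarith
    · simp only
      omega

lemma cf_r_mono {α : ℝ} (hα : Irrational α) : ∀ k m : ℕ, 1 ≤ k → k ≤ m →
    (cfR α k).1 ≤ (cfR α m).1 := by
  intro k m hk hkm
  induction m, hkm using Nat.le_induction with
  | base => exact le_refl _
  | succ m hm ih =>
    have h1 := cf_r_pos hα m (le_trans hk hm)
    have ha : 1 ≤ cfDigit α m := cfDigit_pos hα (le_trans hk hm)
    rw [cfR_succ]
    simp only
    nlinarith [ih]

lemma cf_r_two {α : ℝ} (hα : Irrational α) (k : ℕ) (hk : 1 ≤ k) :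
    (cfR α k).1 + 1 ≤ (cfR α (k + 2)).1 := by
  have h1 := cf_r_pos hα k hk
  have h2 := cf_r_pos hα (k + 1) (by omega)
  have ha : 1 ≤ cfDigit α (k + 1) := cfDigit_pos hα (by omega)
  have hs : (cfR α (k + 2)).1 = (cfR α (k+1)).1 * cfDigit α (k+1) + (cfR α k).1 := by
    rw [cfR_succ]
    simp only
    rw [cfR_succ]
  rw [hs]
  nlinarith [h1.1, h2.1]

lemma cf_r_unbounded {α : ℝ} (hα : Irrational α) (T : ℤ) :
    ∃ k : ℕ, 1 ≤ k ∧ ∀ m : ℕ, k ≤ m → T ≤ (cfR α m).1 := by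
  have grow : ∀ j : ℕ, (j : ℤ) + 1 ≤ (cfR α (2 * j + 1)).1 := by
    intro j
    induction j with
    | zero => rw [cf_r_base]; simp
    | succ j ih =>
      have := cf_r_two hα (2 * j + 1) (by omega)
      have hidx : 2 * (j + 1) + 1 = (2 * j + 1) + 2 := by omega
      rw [hidx]
      push_cast
      omega
  refine ⟨2 * T.toNat + 1, by omega, fun m hm => ?_⟩
  have h1 := grow T.toNat
  have h2 := cf_r_mono hα (2 * T.toNat + 1) m (by omega) hm
  omega

/-- Serret's theorem: two irrational numbers are `GL(2,ℤ)`-equivalent iff their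
regular continued fraction expansions have the same tail. -/
theorem stmt_1 (α β : ℝ) (hα : Irrational α) (hβ : Irrational β) :
    (∃ a b c d : ℤ, (a * d - b * c = 1 ∨ a * d - b * c = -1) ∧
        β = (a * α + b) / (c * α + d)) ↔
    (∃ k m : ℕ, ∀ i : ℕ, cfDigit α (k + i) = cfDigit β (m + i)) := by
  constructor
  · rintro ⟨a, b, c, d, hdet, heq⟩
    have hcd_ne : (c : ℝ) * α + d ≠ 0 := denom_ne_zero hα (det_ne_both_zero hdet)
    obtain ⟨a, b, c, d, hdet, heq, hpos⟩ :
        ∃ a b c d : ℤ, (a * d - b * c = 1 ∨ a * d - b * c = -1) ∧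
          β = ((a : ℝ) * α + b) / ((c : ℝ) * α + d) ∧ 0 < (c : ℝ) * α + d := by
      rcases lt_or_gt_of_ne hcd_ne with hneg | hp
      · refine ⟨-a, -b, -c, -d, ?_, ?_, ?_⟩
        · rcases hdet with h | h
          · left; linear_combination h
          · right; linear_combination h
        · have h2 : ((-a : ℤ) : ℝ) * α + ((-b : ℤ) : ℝ) = -((a : ℝ) * α + b) := by
            push_cast; ring
          have h3 : ((-c : ℤ) : ℝ) * α + ((-d : ℤ) : ℝ) = -((c : ℝ) * α + d) := by
            push_cast; ring
          rw [h2, h3, neg_div_neg_eq]; exact heq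
        · push_cast; linarith
      · exact ⟨a, b, c, d, hdet, heq, hp⟩
    clear hcd_ne
    have hT := Int.le_ceil ((1 + |(c : ℝ)|) / ((c : ℝ) * α + d))
    set T : ℤ := ⌈(1 + |(c : ℝ)|) / ((c : ℝ) * α + d)⌉ with hTdef
    clear_value T
    obtain ⟨k0, hk01, hk0⟩ := cf_r_unbounded hα T
    have hCpos : ∀ k, k0 ≤ k → 1 ≤ c * (cfP α k).1 + d * (cfR α k).1 := by
      intro k hk
      have hk1 : 1 ≤ k := le_trans hk01 hk
      obtain ⟨hden, heqk⟩ := cf_alpha hα k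
      obtain ⟨hr1, hs0⟩ := cf_r_pos hα k hk1
      have hrT : T ≤ (cfR α k).1 := hk0 k hk
      set p := (cfP α k).1 with hp
      set q := (cfP α k).2 with hq
      set r := (cfR α k).1 with hr
      set s := (cfR α k).2 with hs
      set x := gaussIter α k with hxdef
      clear_value p q r s x
      have hx1 : 1 < x := by rw [hxdef]; exact one_lt_gaussIter hα hk1
      have hrr : (1 : ℝ) ≤ (r : ℝ) := by exact_mod_cast hr1
      have hss : (0 : ℝ) ≤ (s : ℝ) := by exact_mod_cast hs0
      have hDn : (1 : ℝ) ≤ (r : ℝ) * x + s := by nlinarith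
      have hDnpos : (0 : ℝ) < (r : ℝ) * x + s := by linarith
      have hdetk := cf_det α k
      rw [← hp, ← hq, ← hr, ← hs] at hdetk
      have e : (α * r - p) * ((r : ℝ) * x + s) = ((q * r - p * s : ℤ) : ℝ) := by
        push_cast; linear_combination (r : ℝ) * heqk
      have habs : |((q * r - p * s : ℤ) : ℝ)| = 1 := by
        rcases hdetk with h | h
        · have : q * r - p * s = -1 := by linarith
          rw [this]; simp
        · have : q * r - p * s = 1 := by linarith
          rw [this]; simp
      have htv : α * (r : ℝ) - p = ((q * r - p * s : ℤ) : ℝ) / ((r : ℝ) * x + s) := by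
        rw [eq_div_iff (ne_of_gt hDnpos)]; exact e
      have h1 : |α * (r : ℝ) - p| ≤ 1 := by
        rw [htv, abs_div, abs_of_pos hDnpos, habs, div_le_one hDnpos]
        exact hDn
      have hct : (c : ℝ) * (α * r - p) ≤ |(c : ℝ)| := by
        calc (c : ℝ) * (α * r - p) ≤ |(c : ℝ) * (α * r - p)| := le_abs_self _
          _ = |(c : ℝ)| * |α * r - p| := abs_mul _ _
          _ ≤ |(c : ℝ)| * 1 := mul_le_mul_of_nonneg_left h1 (abs_nonneg _)
          _ = |(c : ℝ)| := mul_one _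
      have hrb : 1 + |(c : ℝ)| ≤ (r : ℝ) * ((c : ℝ) * α + d) := by
        have hTr : ((T : ℤ) : ℝ) ≤ (r : ℝ) := by exact_mod_cast hrT
        have h2 : (1 + |(c : ℝ)|) / ((c : ℝ) * α + d) ≤ (r : ℝ) := le_trans hT hTr
        rw [div_le_iff₀ hpos] at h2
        exact h2
      have hfin : (1 : ℝ) ≤ ((c * p + d * r : ℤ) : ℝ) := by
        have id1 : ((c * p + d * r : ℤ) : ℝ)
            = (r : ℝ) * ((c : ℝ) * α + d) - (c : ℝ) * (α * r - p) := by
          push_cast; ring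
        rw [id1]; linarith
      exact_mod_cast hfin
    set K : ℕ := k0 + 2 with hKdef
    set x : ℝ := gaussIter α K with hxdef
    set A : ℤ := a * (cfP α K).1 + b * (cfR α K).1 with hA
    set B : ℤ := a * (cfP α K).2 + b * (cfR α K).2 with hB
    set C : ℤ := c * (cfP α K).1 + d * (cfR α K).1 with hC
    set D : ℤ := c * (cfP α K).2 + d * (cfR α K).2 with hD
    have hqs : (cfP α K).2 = (cfP α (k0 + 1)).1 := rfl
    have hss : (cfR α K).2 = (cfR α (k0 + 1)).1 := rfl
    have hD1 : 1 ≤ D := by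
      rw [hD, hqs, hss]; exact hCpos (k0 + 1) (by omega)
    have hC1 : 1 ≤ C := by rw [hC]; exact hCpos K (by omega)
    have hDltC : D < C := by
      have hexp : C = cfDigit α (k0 + 1) * (c * (cfP α (k0 + 1)).1 + d * (cfR α (k0 + 1)).1)
          + (c * (cfP α k0).1 + d * (cfR α k0).1) := by
        rw [hC, hKdef]
        rw [show k0 + 2 = (k0 + 1) + 1 from rfl, cfP_succ, cfR_succ]
        simp only
        rw [cfP_succ, cfR_succ]
        simp only
        ring
      have h1 := hCpos (k0 + 1) (by omega)
      have h2 := hCpos k0 le_rfl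
      have ha1 : 1 ≤ cfDigit α (k0 + 1) := cfDigit_pos hα (by omega)
      have hDeq : D = c * (cfP α (k0 + 1)).1 + d * (cfR α (k0 + 1)).1 := by
        rw [hD, hqs, hss]
      rw [hexp, hDeq]
      nlinarith
    have hdetK := cf_det α K
    have hdetN : A * D - B * C = 1 ∨ A * D - B * C = -1 := by
      rw [hA, hB, hC, hD]
      rcases hdet with h1 | h1 <;> rcases hdetK with h2 | h2
      · left; linear_combination (a * d - b * c) * h2 + h1
      · right; linear_combination (a * d - b * c) * h2 - h1
      · right; linear_combination (a * d - b * c) * h2 + h1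
      · left; linear_combination (a * d - b * c) * h2 - h1
    obtain ⟨hdenK, heqK⟩ := cf_alpha hα K
    rw [← hxdef] at hdenK heqK
    have eC : (C : ℝ) * x + D
        = ((c : ℝ) * α + d) * (((cfR α K).1 : ℝ) * x + ((cfR α K).2 : ℝ)) := by
      rw [hC, hD]; push_cast
      linear_combination (-(c : ℝ)) * heqK
    have eA : (A : ℝ) * x + B
        = ((a : ℝ) * α + b) * (((cfR α K).1 : ℝ) * x + ((cfR α K).2 : ℝ)) := by
      rw [hA, hB]; push_cast
      linear_combination (-(a : ℝ)) * heqK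
    have heqN : β = ((A : ℝ) * x + B) / ((C : ℝ) * x + D) := by
      rw [heq, eA, eC, mul_div_mul_right _ _ (ne_of_gt hdenK)]
    clear_value A B C D
    obtain ⟨N, M, hNM⟩ := descent C.toNat A B C D le_rfl hC1 (by omega) (le_of_lt hDltC)
      (fun h => absurd h (by omega)) hdetN x (hα.gaussIterate K)
      (one_lt_gaussIter hα (by omega))
    rw [← heqN] at hNM
    refine ⟨K + M, N, fun i => ?_⟩
    rw [cfDigit_shift α (K + M) i, gaussIter_add α K M, ← hxdef, ← hNM, ← cfDigit_shift]
  · rintro ⟨k, m, hdig⟩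
    have hxy : gaussIter α k = gaussIter β m :=
      cf_eq_of_digits_eq (hα.gaussIterate k) (hβ.gaussIterate m)
        (fun i => by rw [← cfDigit_shift, ← cfDigit_shift]; exact hdig i)
    have h1 : IsGL (gaussIter α k) α := isGL_gaussIter hα k
    have h2 : IsGL (gaussIter β m) β := isGL_gaussIter hβ m
    have h3 : IsGL α (gaussIter α k) := isGL_symm (hα.gaussIterate k) h1
    rw [hxy] at h3
    exact isGL_trans hα h3 h2
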